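/- Fix 0 < φ < φ* and let G : ℝ → ℝ be continuous with |G(λ)| ≤ C₁ + C₂·λ for all λ ≥ 0, where C₁, C₂ ≥ 0 are constants such that e^{q·C₂}·φ < φ* for some q > 1. Define the log-moment generating function Λ(θ) := log( Z(e^θ · φ) / Z(φ) ) for θ ∈ ℝ (with Λ(θ) := +∞ when e^θ·φ ≥ φ*) and the rate function J(λ) := sup_{θ∈ℝ} ( θ·λ − Λ(θ) ). Then limsup_{m→∞} (1/m) · log ∫ exp( m · G( (ω_1 + ⋯ + ω_m)/m ) ) d(P_φ)^{⊗m}(ω) ≤ sup_{λ≥0} ( G(λ) − J(λ) ). -/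

import Mathlib

open scoped ENNReal BigOperators

/-- `g(k)! = ∏_{i=1}^k g(i)`, with `g(0)! = 1`. -/
noncomputable def gfact (g : ℕ → ℝ) (k : ℕ) : ℝ := ∏ i ∈ Finset.Icc 1 k, g i

/-- The partition function `Z(s) = Σ_{k≥0} s^k / g(k)!`. -/
noncomputable def Zfun (g : ℕ → ℝ) (s : ℝ) : ℝ := ∑' k : ℕ, s ^ k / gfact g k

/-- `φstar` is the radius of convergence of the power series `Z`. -/
def IsConvRadius (g : ℕ → ℝ) (φstar : ℝ≥0∞) : Prop :=
  (∀ s : ℝ, 0 ≤ s → ENNReal.ofReal s < φstar →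
      Summable (fun k : ℕ => s ^ k / gfact g k)) ∧
  (∀ s : ℝ, 0 ≤ s → Summable (fun k : ℕ => s ^ k / gfact g k) →
      ENNReal.ofReal s ≤ φstar)

/-- The one-site zero range weight `P_φ({k}) = φ^k / (Z(φ) g(k)!)`. -/
noncomputable def Pzr (g : ℕ → ℝ) (φ : ℝ) (k : ℕ) : ℝ := φ ^ k / (Zfun g φ * gfact g k)

open MeasureTheory

/-- The one-site zero range measure `P_φ` on `ℕ`. -/
noncomputable def Pmeas (g : ℕ → ℝ) (φ : ℝ) : Measure ℕ :=
  Measure.count.withDensity (fun k => ENNReal.ofReal (Pzr g φ k))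

open Classical in
/-- The log-moment generating function `Λ(θ) = log(Z(e^θ φ)/Z(φ))`, set to `+∞`
when `e^θ φ ≥ φ*`. -/
noncomputable def LambdaFn (g : ℕ → ℝ) (φstar : ℝ≥0∞) (φ θ : ℝ) : EReal :=
  if ENNReal.ofReal (Real.exp θ * φ) < φstar then
    ((Real.log (Zfun g (Real.exp θ * φ) / Zfun g φ) : ℝ) : EReal)
  else ⊤

/-- The large deviations rate function `J(λ) = sup_θ (θλ − Λ(θ))`. -/
noncomputable def Jrate (g : ℕ → ℝ) (φstar : ℝ≥0∞) (φ lam : ℝ) : EReal :=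
  ⨆ θ : ℝ, (((θ * lam : ℝ) : EReal) - LambdaFn g φstar φ θ)

open MeasureTheory Real Filter

section Aux
variable {g : ℕ → ℝ} {φstar : ℝ≥0∞} {φ : ℝ}

lemma gfact_pos (hgpos : ∀ k : ℕ, 1 ≤ k → 0 < g k) (k : ℕ) : 0 < gfact g k :=
  Finset.prod_pos fun i hi => hgpos i (Finset.mem_Icc.mp hi).1

lemma gfact_zero : gfact g 0 = 1 := by simp [gfact]

lemma Zterm_nonneg (hgpos : ∀ k : ℕ, 1 ≤ k → 0 < g k) {s : ℝ} (hs0 : 0 ≤ s) (k : ℕ) :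
    0 ≤ s ^ k / gfact g k :=
  div_nonneg (pow_nonneg hs0 k) (gfact_pos hgpos k).le

lemma summable_Z (hrad : IsConvRadius g φstar) {s : ℝ} (hs0 : 0 ≤ s)
    (hs : ENNReal.ofReal s < φstar) : Summable (fun k : ℕ => s ^ k / gfact g k) :=
  hrad.1 s hs0 hs

lemma Zfun_ge_one (hgpos : ∀ k : ℕ, 1 ≤ k → 0 < g k) {s : ℝ} (hs0 : 0 ≤ s)
    (hsum : Summable (fun k : ℕ => s ^ k / gfact g k)) : 1 ≤ Zfun g s := by
  have h0 : (1 : ℝ) = s ^ 0 / gfact g 0 := by simp [gfact_zero]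
  rw [Zfun, h0]
  exact Summable.le_tsum hsum 0 (fun i _ => Zterm_nonneg hgpos hs0 i)

lemma Zfun_pos (hgpos : ∀ k : ℕ, 1 ≤ k → 0 < g k) {s : ℝ} (hs0 : 0 ≤ s)
    (hsum : Summable (fun k : ℕ => s ^ k / gfact g k)) : 0 < Zfun g s :=
  lt_of_lt_of_le one_pos (Zfun_ge_one hgpos hs0 hsum)

lemma Pzr_nonneg (hgpos : ∀ k : ℕ, 1 ≤ k → 0 < g k) (hφ0 : 0 ≤ φ)
    (hsum : Summable (fun k : ℕ => φ ^ k / gfact g k)) (k : ℕ) : 0 ≤ Pzr g φ k :=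
  div_nonneg (pow_nonneg hφ0 k)
    (mul_nonneg (Zfun_pos hgpos hφ0 hsum).le (gfact_pos hgpos k).le)

lemma Pmeas_lintegral (f : ℕ → ℝ≥0∞) :
    ∫⁻ k, f k ∂(Pmeas g φ) = ∑' k, ENNReal.ofReal (Pzr g φ k) * f k := by
  rw [Pmeas, lintegral_withDensity_eq_lintegral_mul _ (by measurability) (by measurability)]
  exact lintegral_count _


/-- MGF computation: `∫⁻ e^{θ·k} dP = Z(e^θ φ)/Z(φ)`. -/
lemma Pmeas_mgf (hgpos : ∀ k : ℕ, 1 ≤ k → 0 < g k) (hφ0 : 0 < φ)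
    (hsumφ : Summable (fun k : ℕ => φ ^ k / gfact g k))
    {θ : ℝ} (hsumθ : Summable (fun k : ℕ => (Real.exp θ * φ) ^ k / gfact g k)) :
    ∫⁻ k, ENNReal.ofReal (Real.exp (θ * k)) ∂(Pmeas g φ) =
      ENNReal.ofReal (Zfun g (Real.exp θ * φ) / Zfun g φ) := by
  rw [Pmeas_lintegral]
  have hZφ := Zfun_pos hgpos hφ0.le hsumφ
  have hterm : ∀ k : ℕ, ENNReal.ofReal (Pzr g φ k) * ENNReal.ofReal (Real.exp (θ * k)) =
      ENNReal.ofReal ((Real.exp θ * φ) ^ k / gfact g k / Zfun g φ) := by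
    intro k
    rw [← ENNReal.ofReal_mul (Pzr_nonneg hgpos hφ0.le hsumφ k)]
    congr 1
    rw [Pzr, mul_pow, ← Real.exp_nat_mul, mul_comm (k:ℝ) θ]
    have hg := (gfact_pos hgpos k).ne'
    field_simp
  simp_rw [hterm]
  rw [← ENNReal.ofReal_tsum_of_nonneg (fun k => div_nonneg
        (Zterm_nonneg hgpos (mul_nonneg (Real.exp_pos θ).le hφ0.le) k) hZφ.le)
      (hsumθ.div_const _)]
  rw [tsum_div_const]
  rfl

lemma Pmeas_univ (hgpos : ∀ k : ℕ, 1 ≤ k → 0 < g k) (hφ0 : 0 < φ)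
    (hsumφ : Summable (fun k : ℕ => φ ^ k / gfact g k)) :
    Pmeas g φ Set.univ = 1 := by
  have := Pmeas_mgf (φ := φ) hgpos hφ0 hsumφ (θ := 0) (by simpa using hsumφ)
  simp only [zero_mul, Real.exp_zero, one_mul, ENNReal.ofReal_one] at this
  rw [← lintegral_one, this, div_self (Zfun_pos hgpos hφ0.le hsumφ).ne', ENNReal.ofReal_one]



lemma measurable_nat_pi {m : ℕ} {β : Type*} [MeasurableSpace β] (f : (Fin m → ℕ) → β) :
    Measurable f := measurable_of_countable f

lemma lintegral_pi_pow (P : Measure ℕ) [SigmaFinite P] (m : ℕ) (f : ℕ → ℝ≥0∞) :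
    ∫⁻ ω : Fin m → ℕ, ∏ i, f (ω i) ∂(Measure.pi fun _ : Fin m => P) =
      (∫⁻ k, f k ∂P) ^ m := by
  induction m with
  | zero => simp
  | succ n ih =>
    have h := (measurePreserving_piFinSuccAbove (fun _ : Fin (n + 1) => P) 0).symm
    rw [h.lintegral_map_equiv (fun ω => ∏ i, f (ω i)) _]
    have heq : ∀ x : ℕ × (Fin n → ℕ),
        (∏ i : Fin (n + 1), f ((MeasurableEquiv.piFinSuccAbove (fun _ => ℕ) 0).symm x i)) =
          f x.1 * ∏ j : Fin n, f (x.2 j) := by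
      intro x
      rw [Fin.prod_univ_succ]
      simp [MeasurableEquiv.piFinSuccAbove, Fin.insertNthEquiv, Fin.insertNth_zero]
    simp_rw [heq]
    have hprod := lintegral_prod_mul (μ := P) (ν := Measure.pi fun _ : Fin n => P)
      (f := f) (g := fun y : Fin n → ℕ => ∏ j : Fin n, f (y j))
      (measurable_of_countable _).aemeasurable (measurable_nat_pi _).aemeasurable
    rw [hprod, ih, pow_succ, mul_comm]

lemma mgf_pi (hgpos : ∀ k : ℕ, 1 ≤ k → 0 < g k) (hφ0 : 0 < φ)
    (hsumφ : Summable (fun k : ℕ => φ ^ k / gfact g k))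
    {θ : ℝ} (hsumθ : Summable (fun k : ℕ => (Real.exp θ * φ) ^ k / gfact g k)) (m : ℕ) :
    ∫⁻ ω : Fin m → ℕ, ENNReal.ofReal (Real.exp (θ * ∑ i, (ω i : ℝ)))
        ∂(Measure.pi fun _ : Fin m => Pmeas g φ) =
      ENNReal.ofReal ((Zfun g (Real.exp θ * φ) / Zfun g φ) ^ m) := by
  haveI : IsFiniteMeasure (Pmeas g φ) :=
    ⟨by rw [Pmeas_univ hgpos hφ0 hsumφ]; exact ENNReal.one_lt_top⟩
  have hpt : ∀ ω : Fin m → ℕ, ENNReal.ofReal (Real.exp (θ * ∑ i, (ω i : ℝ))) =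
      ∏ i : Fin m, ENNReal.ofReal (Real.exp (θ * (ω i : ℝ))) := by
    intro ω
    rw [Finset.mul_sum, Real.exp_sum, ← ENNReal.ofReal_prod_of_nonneg]
    intro i _
    exact (Real.exp_pos _).le
  simp_rw [hpt]
  rw [lintegral_pi_pow (Pmeas g φ) m (fun k : ℕ => ENNReal.ofReal (Real.exp (θ * k))),
    Pmeas_mgf hgpos hφ0 hsumφ hsumθ,
    ← ENNReal.ofReal_pow (div_nonneg (Zfun_pos hgpos
      (mul_nonneg (Real.exp_pos θ).le hφ0.le) hsumθ).le (Zfun_pos hgpos hφ0.le hsumφ).le)]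

lemma chernoff_aux (hgpos : ∀ k : ℕ, 1 ≤ k → 0 < g k) (hφ0 : 0 < φ)
    (hsumφ : Summable (fun k : ℕ => φ ^ k / gfact g k))
    {θ : ℝ} (hsumθ : Summable (fun k : ℕ => (Real.exp θ * φ) ^ k / gfact g k)) (m : ℕ)
    {E : Set (Fin m → ℕ)} {c : ℝ}
    (hE : ∀ ω ∈ E, 0 ≤ θ * ((∑ i, (ω i : ℝ)) - c)) :
    (Measure.pi fun _ : Fin m => Pmeas g φ) E ≤
      ENNReal.ofReal (Real.exp (-(θ * c) + m * Real.log (Zfun g (Real.exp θ * φ) / Zfun g φ))) := by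
  have hratio : 0 < Zfun g (Real.exp θ * φ) / Zfun g φ :=
    div_pos (Zfun_pos hgpos (mul_nonneg (Real.exp_pos θ).le hφ0.le) hsumθ)
      (Zfun_pos hgpos hφ0.le hsumφ)
  calc (Measure.pi fun _ : Fin m => Pmeas g φ) E
      ≤ ∫⁻ ω : Fin m → ℕ, ENNReal.ofReal (Real.exp (θ * ((∑ i, (ω i : ℝ)) - c)))
          ∂(Measure.pi fun _ : Fin m => Pmeas g φ) := by
        rw [← lintegral_indicator_one (E.to_countable.measurableSet)]
        refine lintegral_mono fun ω => ?_
        by_cases hω : ω ∈ E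
        · simp only [Set.indicator_of_mem hω]
          exact ENNReal.one_le_ofReal.2 (Real.one_le_exp (hE ω hω))
        · simp [Set.indicator_of_notMem hω]
    _ = ∫⁻ ω : Fin m → ℕ, ENNReal.ofReal (Real.exp (-(θ * c))) *
          ENNReal.ofReal (Real.exp (θ * ∑ i, (ω i : ℝ)))
          ∂(Measure.pi fun _ : Fin m => Pmeas g φ) := by
        congr 1
        funext ω
        rw [← ENNReal.ofReal_mul (Real.exp_pos _).le, ← Real.exp_add]
        ring_nf
    _ = ENNReal.ofReal (Real.exp (-(θ * c))) *
          ENNReal.ofReal ((Zfun g (Real.exp θ * φ) / Zfun g φ) ^ m) := by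
        rw [lintegral_const_mul' _ _ ENNReal.ofReal_ne_top, mgf_pi hgpos hφ0 hsumφ hsumθ]
    _ = ENNReal.ofReal (Real.exp (-(θ * c) + m * Real.log (Zfun g (Real.exp θ * φ) / Zfun g φ))) := by
        rw [← ENNReal.ofReal_mul (Real.exp_pos _).le, ← Real.exp_log (pow_pos hratio m),
          Real.log_pow, ← Real.exp_add]


/-! ### Lambda and rate function lemmas -/

noncomputable def Lr (g : ℕ → ℝ) (φ θ : ℝ) : ℝ :=
  Real.log (Zfun g (Real.exp θ * φ) / Zfun g φ)

lemma LambdaFn_of_lt {θ : ℝ} (h : ENNReal.ofReal (Real.exp θ * φ) < φstar) :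
    LambdaFn g φstar φ θ = ((Lr g φ θ : ℝ) : EReal) := by
  rw [LambdaFn, if_pos h]; rfl

lemma LambdaFn_of_not_lt {θ : ℝ} (h : ¬ ENNReal.ofReal (Real.exp θ * φ) < φstar) :
    LambdaFn g φstar φ θ = ⊤ := by rw [LambdaFn, if_neg h]

lemma LambdaFn_ne_bot (θ : ℝ) : LambdaFn g φstar φ θ ≠ ⊥ := by
  rw [LambdaFn]
  split
  · exact EReal.coe_ne_bot _
  · exact top_ne_bot

lemma Lr_zero (hgpos : ∀ k : ℕ, 1 ≤ k → 0 < g k) (hφ0 : 0 < φ)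
    (hsumφ : Summable (fun k : ℕ => φ ^ k / gfact g k)) : Lr g φ 0 = 0 := by
  rw [Lr, Real.exp_zero, one_mul, div_self (Zfun_pos hgpos hφ0.le hsumφ).ne', Real.log_one]

lemma LambdaFn_zero (hgpos : ∀ k : ℕ, 1 ≤ k → 0 < g k) (hφ0 : 0 < φ)
    (hφlt : ENNReal.ofReal φ < φstar)
    (hsumφ : Summable (fun k : ℕ => φ ^ k / gfact g k)) :
    LambdaFn g φstar φ 0 = (0 : EReal) := by
  rw [LambdaFn_of_lt (by simpa using hφlt), Lr_zero hgpos hφ0 hsumφ]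
  rfl

noncomputable def Jp (g : ℕ → ℝ) (φstar : ℝ≥0∞) (φ lam : ℝ) : EReal :=
  ⨆ θ : ℝ, ⨆ _ : 0 ≤ θ, (((θ * lam : ℝ) : EReal) - LambdaFn g φstar φ θ)

noncomputable def Jm (g : ℕ → ℝ) (φstar : ℝ≥0∞) (φ lam : ℝ) : EReal :=
  ⨆ θ : ℝ, ⨆ _ : θ ≤ 0, (((θ * lam : ℝ) : EReal) - LambdaFn g φstar φ θ)

lemma Jrate_eq_max (lam : ℝ) :
    Jrate g φstar φ lam = max (Jp g φstar φ lam) (Jm g φstar φ lam) := by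
  apply le_antisymm
  · refine iSup_le fun θ => ?_
    rcases le_total 0 θ with h | h
    · exact le_trans (le_iSup₂ (f := fun θ (_ : 0 ≤ θ) =>
        (((θ * lam : ℝ) : EReal) - LambdaFn g φstar φ θ)) θ h) (le_max_left _ _)
    · exact le_trans (le_iSup₂ (f := fun θ (_ : θ ≤ 0) =>
        (((θ * lam : ℝ) : EReal) - LambdaFn g φstar φ θ)) θ h) (le_max_right _ _)
  · exact max_le (iSup₂_le fun θ _ => le_iSup (fun θ =>
      (((θ * lam : ℝ) : EReal) - LambdaFn g φstar φ θ)) θ)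
      (iSup₂_le fun θ _ => le_iSup (fun θ =>
      (((θ * lam : ℝ) : EReal) - LambdaFn g φstar φ θ)) θ)

lemma Jp_nonneg (hgpos : ∀ k : ℕ, 1 ≤ k → 0 < g k) (hφ0 : 0 < φ)
    (hφlt : ENNReal.ofReal φ < φstar)
    (hsumφ : Summable (fun k : ℕ => φ ^ k / gfact g k)) (lam : ℝ) :
    (0 : EReal) ≤ Jp g φstar φ lam := by
  have h0 : (((0 * lam : ℝ) : EReal) - LambdaFn g φstar φ 0) = (0 : EReal) := by
    rw [LambdaFn_zero hgpos hφ0 hφlt hsumφ, zero_mul, sub_zero]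
    rfl
  calc (0 : EReal) = (((0 * lam : ℝ) : EReal) - LambdaFn g φstar φ 0) := h0.symm
    _ ≤ Jp g φstar φ lam := le_iSup₂ (f := fun θ (_ : 0 ≤ θ) =>
        (((θ * lam : ℝ) : EReal) - LambdaFn g φstar φ θ)) 0 le_rfl

/-- extraction of a near-optimal tilt from `c < Jp`. -/
lemma Jp_extract {lam c : ℝ} (h : (c : EReal) < Jp g φstar φ lam) :
    ∃ θ : ℝ, 0 ≤ θ ∧ ENNReal.ofReal (Real.exp θ * φ) < φstar ∧
      c < θ * lam - Lr g φ θ := by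
  rw [Jp, lt_iSup_iff] at h
  obtain ⟨θ, h⟩ := h
  rw [lt_iSup_iff] at h
  obtain ⟨hθ, h⟩ := h
  refine ⟨θ, hθ, ?_, ?_⟩
  · by_contra hc
    rw [LambdaFn_of_not_lt hc, EReal.sub_top] at h
    exact (not_lt_bot h)
  · have hc : ENNReal.ofReal (Real.exp θ * φ) < φstar := by
      by_contra hc
      rw [LambdaFn_of_not_lt hc, EReal.sub_top] at h
      exact (not_lt_bot h)
    rw [LambdaFn_of_lt hc, ← EReal.coe_sub, EReal.coe_lt_coe_iff] at h
    exact h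

lemma Jm_extract {lam c : ℝ} (h : (c : EReal) < Jm g φstar φ lam) :
    ∃ θ : ℝ, θ ≤ 0 ∧ ENNReal.ofReal (Real.exp θ * φ) < φstar ∧
      c < θ * lam - Lr g φ θ := by
  rw [Jm, lt_iSup_iff] at h
  obtain ⟨θ, h⟩ := h
  rw [lt_iSup_iff] at h
  obtain ⟨hθ, h⟩ := h
  refine ⟨θ, hθ, ?_, ?_⟩
  · by_contra hc
    rw [LambdaFn_of_not_lt hc, EReal.sub_top] at h
    exact (not_lt_bot h)
  · have hc : ENNReal.ofReal (Real.exp θ * φ) < φstar := by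
      by_contra hc
      rw [LambdaFn_of_not_lt hc, EReal.sub_top] at h
      exact (not_lt_bot h)
    rw [LambdaFn_of_lt hc, ← EReal.coe_sub, EReal.coe_lt_coe_iff] at h
    exact h

lemma isOpen_Jp_gt (c : ℝ) : IsOpen {lam : ℝ | (c : EReal) < Jp g φstar φ lam} := by
  have hset : {lam : ℝ | (c : EReal) < Jp g φstar φ lam} =
      ⋃ (θ : ℝ), ⋃ (_ : 0 ≤ θ ∧ ENNReal.ofReal (Real.exp θ * φ) < φstar),
        {lam : ℝ | c < θ * lam - Lr g φ θ} := by
    ext lam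
    simp only [Set.mem_setOf_eq, Set.mem_iUnion]
    constructor
    · intro h
      obtain ⟨θ, hθ, hc, hlt⟩ := Jp_extract h
      exact ⟨θ, ⟨hθ, hc⟩, hlt⟩
    · rintro ⟨θ, ⟨hθ, hc⟩, hlt⟩
      have : (((θ * lam : ℝ) : EReal) - LambdaFn g φstar φ θ) ≤ Jp g φstar φ lam :=
        le_iSup₂ (f := fun θ (_ : 0 ≤ θ) =>
          (((θ * lam : ℝ) : EReal) - LambdaFn g φstar φ θ)) θ hθ
      refine lt_of_lt_of_le ?_ this
      rw [LambdaFn_of_lt hc, ← EReal.coe_sub, EReal.coe_lt_coe_iff]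
      exact hlt
  rw [hset]
  refine isOpen_iUnion fun θ => isOpen_iUnion fun _ => ?_
  have : Continuous fun lam : ℝ => θ * lam - Lr g φ θ := by continuity
  exact isOpen_lt continuous_const this

lemma isOpen_Jm_gt (c : ℝ) : IsOpen {lam : ℝ | (c : EReal) < Jm g φstar φ lam} := by
  have hset : {lam : ℝ | (c : EReal) < Jm g φstar φ lam} =
      ⋃ (θ : ℝ), ⋃ (_ : θ ≤ 0 ∧ ENNReal.ofReal (Real.exp θ * φ) < φstar),
        {lam : ℝ | c < θ * lam - Lr g φ θ} := by
    ext lam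
    simp only [Set.mem_setOf_eq, Set.mem_iUnion]
    constructor
    · intro h
      obtain ⟨θ, hθ, hc, hlt⟩ := Jm_extract h
      exact ⟨θ, ⟨hθ, hc⟩, hlt⟩
    · rintro ⟨θ, ⟨hθ, hc⟩, hlt⟩
      have : (((θ * lam : ℝ) : EReal) - LambdaFn g φstar φ θ) ≤ Jm g φstar φ lam :=
        le_iSup₂ (f := fun θ (_ : θ ≤ 0) =>
          (((θ * lam : ℝ) : EReal) - LambdaFn g φstar φ θ)) θ hθ
      refine lt_of_lt_of_le ?_ this
      rw [LambdaFn_of_lt hc, ← EReal.coe_sub, EReal.coe_lt_coe_iff]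
      exact hlt
  rw [hset]
  refine isOpen_iUnion fun θ => isOpen_iUnion fun _ => ?_
  have : Continuous fun lam : ℝ => θ * lam - Lr g φ θ := by continuity
  exact isOpen_lt continuous_const this


/-- Hölder: convexity of `Λ` through `0`. -/
lemma lr_comb_nonneg (hgpos : ∀ k : ℕ, 1 ≤ k → 0 < g k) (hφ0 : 0 < φ)
    (hsumφ : Summable (fun k : ℕ => φ ^ k / gfact g k))
    {θ σ t : ℝ}
    (hsumθ : Summable (fun k : ℕ => (Real.exp θ * φ) ^ k / gfact g k))
    (hsumσ : Summable (fun k : ℕ => (Real.exp σ * φ) ^ k / gfact g k))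
    (ht0 : 0 < t) (ht1 : t < 1) (hcomb : t * θ + (1 - t) * σ = 0) :
    0 ≤ t * Lr g φ θ + (1 - t) * Lr g φ σ := by
  have hZφ := Zfun_pos hgpos hφ0.le hsumφ
  have hratθ : 0 < Zfun g (Real.exp θ * φ) / Zfun g φ :=
    div_pos (Zfun_pos hgpos (mul_nonneg (Real.exp_pos θ).le hφ0.le) hsumθ) hZφ
  have hratσ : 0 < Zfun g (Real.exp σ * φ) / Zfun g φ :=
    div_pos (Zfun_pos hgpos (mul_nonneg (Real.exp_pos σ).le hφ0.le) hsumσ) hZφ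
  have hpq : Real.HolderConjugate (1 / t) (1 / (1 - t)) := by
    rw [Real.holderConjugate_iff]
    constructor
    · rw [lt_div_iff₀ ht0, one_mul]; exact ht1
    · field_simp
      ring
  have hH := ENNReal.lintegral_mul_le_Lp_mul_Lq (Pmeas g φ) hpq
    (f := fun k : ℕ => ENNReal.ofReal (Real.exp (θ * k)) ^ t)
    (g := fun k : ℕ => ENNReal.ofReal (Real.exp (σ * k)) ^ (1 - t))
    (measurable_of_countable _).aemeasurable (measurable_of_countable _).aemeasurable
  have hfg : ∀ k : ℕ, (ENNReal.ofReal (Real.exp (θ * k)) ^ t) *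
      (ENNReal.ofReal (Real.exp (σ * k)) ^ (1 - t)) = 1 := by
    intro k
    rw [ENNReal.ofReal_rpow_of_pos (Real.exp_pos _), ENNReal.ofReal_rpow_of_pos (Real.exp_pos _),
      ← Real.exp_mul, ← Real.exp_mul, ← ENNReal.ofReal_mul (Real.exp_pos _).le, ← Real.exp_add]
    have : θ * ↑k * t + σ * ↑k * (1 - t) = (t * θ + (1 - t) * σ) * k := by ring
    rw [this, hcomb, zero_mul, Real.exp_zero, ENNReal.ofReal_one]
  have hfp : ∀ k : ℕ, (ENNReal.ofReal (Real.exp (θ * k)) ^ t) ^ (1 / t) =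
      ENNReal.ofReal (Real.exp (θ * k)) := by
    intro k
    rw [← ENNReal.rpow_mul, mul_one_div, div_self ht0.ne', ENNReal.rpow_one]
  have hgq : ∀ k : ℕ, (ENNReal.ofReal (Real.exp (σ * k)) ^ (1 - t)) ^ (1 / (1 - t)) =
      ENNReal.ofReal (Real.exp (σ * k)) := by
    intro k
    rw [← ENNReal.rpow_mul, mul_one_div, div_self (by linarith : (1:ℝ) - t ≠ 0),
      ENNReal.rpow_one]
  simp only [Pi.mul_apply, hfg] at hH
  simp_rw [hfp, hgq] at hH
  rw [lintegral_one, Pmeas_univ hgpos hφ0 hsumφ, Pmeas_mgf hgpos hφ0 hsumφ hsumθ,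
    Pmeas_mgf hgpos hφ0 hsumφ hsumσ, one_div_one_div, one_div_one_div,
    ENNReal.ofReal_rpow_of_pos hratθ, ENNReal.ofReal_rpow_of_pos hratσ,
    ← ENNReal.ofReal_mul (Real.rpow_nonneg hratθ.le t)] at hH
  have h1 := ENNReal.one_le_ofReal.mp hH
  rw [Real.rpow_def_of_pos hratθ, Real.rpow_def_of_pos hratσ, ← Real.exp_add,
    Real.one_le_exp_iff] at h1
  rw [Lr, Lr]
  linarith


lemma exists_low_J (hgpos : ∀ k : ℕ, 1 ≤ k → 0 < g k) (hrad : IsConvRadius g φstar)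
    (hφ0 : 0 < φ) (hsumφ : Summable (fun k : ℕ => φ ^ k / gfact g k))
    {a b μ ε : ℝ} (hab : a ≤ b) (hμ0 : 0 ≤ μ) (hε : 0 < ε)
    (hJpa : Jp g φstar φ a ≤ (μ : EReal)) (hJmb : Jm g φstar φ b ≤ (μ : EReal)) :
    ∃ lam ∈ Set.Icc a b, Jrate g φstar φ lam ≤ ((μ + ε : ℝ) : EReal) := by
  by_contra hcon
  push_neg at hcon
  have hμμε : (μ : EReal) < ((μ + ε : ℝ) : EReal) := EReal.coe_lt_coe_iff.mpr (by linarith)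
  have hsub : Set.Icc a b ⊆ {lam : ℝ | (μ : EReal) < Jm g φstar φ lam} ∪
      {lam : ℝ | (μ : EReal) < Jp g φstar φ lam} := by
    intro lam hlam
    have h := hcon lam hlam
    rw [Jrate_eq_max, lt_max_iff] at h
    rcases h with h | h
    · exact Or.inr (hμμε.trans h)
    · exact Or.inl (hμμε.trans h)
  have hne1 : (Set.Icc a b ∩ {lam : ℝ | (μ : EReal) < Jm g φstar φ lam}).Nonempty := by
    refine ⟨a, ⟨le_rfl, hab⟩, ?_⟩
    have h := hcon a ⟨le_rfl, hab⟩
    rw [Jrate_eq_max, lt_max_iff] at h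
    rcases h with h | h
    · exact absurd (EReal.coe_lt_coe_iff.mp (h.trans_le hJpa)) (by linarith)
    · exact hμμε.trans h
  have hne2 : (Set.Icc a b ∩ {lam : ℝ | (μ : EReal) < Jp g φstar φ lam}).Nonempty := by
    refine ⟨b, ⟨hab, le_rfl⟩, ?_⟩
    have h := hcon b ⟨hab, le_rfl⟩
    rw [Jrate_eq_max, lt_max_iff] at h
    rcases h with h | h
    · exact hμμε.trans h
    · exact absurd (EReal.coe_lt_coe_iff.mp (h.trans_le hJmb)) (by linarith)
  obtain ⟨lam, _, hmemJm, hmemJp⟩ :=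
    isPreconnected_Icc (u := {lam : ℝ | (μ : EReal) < Jm g φstar φ lam})
      (v := {lam : ℝ | (μ : EReal) < Jp g φstar φ lam})
      (isOpen_Jm_gt μ) (isOpen_Jp_gt μ) hsub hne1 hne2
  obtain ⟨θ, hθ0, hcondθ, hltθ⟩ := Jp_extract hmemJp
  obtain ⟨σ, hσ0, hcondσ, hltσ⟩ := Jm_extract hmemJm
  have hθpos : 0 < θ := by
    rcases hθ0.lt_or_eq with h | h
    · exact h
    · exfalso
      rw [← h, zero_mul, Lr_zero hgpos hφ0 hsumφ, zero_sub, neg_zero] at hltθ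
      linarith
  have hσneg : σ < 0 := by
    rcases hσ0.lt_or_eq with h | h
    · exact h
    · exfalso
      rw [h, zero_mul, Lr_zero hgpos hφ0 hsumφ, zero_sub, neg_zero] at hltσ
      linarith
  set t : ℝ := -σ / (θ - σ) with ht_def
  have hθσ : 0 < θ - σ := by linarith
  have ht0 : 0 < t := div_pos (by linarith) hθσ
  have ht1 : t < 1 := (div_lt_one hθσ).2 (by linarith)
  have hcomb : t * θ + (1 - t) * σ = 0 := by
    rw [ht_def]
    field_simp
    ring
  have hsumθ := summable_Z hrad (mul_nonneg (Real.exp_pos θ).le hφ0.le) hcondθ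
  have hsumσ := summable_Z hrad (mul_nonneg (Real.exp_pos σ).le hφ0.le) hcondσ
  have hX := lr_comb_nonneg hgpos hφ0 hsumφ hsumθ hsumσ ht0 ht1 hcomb
  have hcl : (t * θ + (1 - t) * σ) * lam = 0 := by rw [hcomb, zero_mul]
  have e1 := mul_lt_mul_of_pos_left hltθ ht0
  have e2 := mul_lt_mul_of_pos_left hltσ (by linarith : (0:ℝ) < 1 - t)
  nlinarith [e1, e2, hcl, hX, hμ0]

lemma meas_Icc_le (hgpos : ∀ k : ℕ, 1 ≤ k → 0 < g k) (hrad : IsConvRadius g φstar)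
    (hφ0 : 0 < φ) (hsumφ : Summable (fun k : ℕ => φ ^ k / gfact g k))
    (m : ℕ) {a b c : ℝ}
    (h : (c : EReal) < max (Jp g φstar φ a) (Jm g φstar φ b)) :
    (Measure.pi fun _ : Fin m => Pmeas g φ)
        {ω : Fin m → ℕ | a ≤ (∑ i, (ω i : ℝ)) / m ∧ (∑ i, (ω i : ℝ)) / m ≤ b} ≤
      ENNReal.ofReal (Real.exp (-((m : ℝ) * c))) := by
  rcases lt_max_iff.mp h with hc | hc
  · obtain ⟨θ, hθ0, hcond, hlt⟩ := Jp_extract hc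
    have hsumθ := summable_Z hrad (mul_nonneg (Real.exp_pos θ).le hφ0.le) hcond
    have hch := chernoff_aux hgpos hφ0 hsumφ hsumθ m
      (E := {ω : Fin m → ℕ | a ≤ (∑ i, (ω i : ℝ)) / m ∧ (∑ i, (ω i : ℝ)) / m ≤ b})
      (c := m * a) ?_
    · refine hch.trans ?_
      apply ENNReal.ofReal_le_ofReal
      apply Real.exp_le_exp.2
      have h2 : -(θ * ((m : ℝ) * a)) + (m : ℝ) * Real.log (Zfun g (Real.exp θ * φ) / Zfun g φ)
          = -((m:ℝ) * (θ * a - Lr g φ θ)) := by rw [Lr]; ring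
      rw [h2]
      exact neg_le_neg (mul_le_mul_of_nonneg_left hlt.le (Nat.cast_nonneg m))
    · rintro ω ⟨h1, _⟩
      apply mul_nonneg hθ0
      rcases Nat.eq_zero_or_pos m with hm | hm
      · subst hm
        norm_num [Finset.univ_eq_empty, Finset.sum_empty]
      · have hmpos : (0:ℝ) < (m:ℝ) := Nat.cast_pos.2 hm
        rw [le_div_iff₀ hmpos] at h1
        linarith [h1]
  · obtain ⟨σ, hσ0, hcond, hlt⟩ := Jm_extract hc
    have hsumσ := summable_Z hrad (mul_nonneg (Real.exp_pos σ).le hφ0.le) hcond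
    have hch := chernoff_aux hgpos hφ0 hsumφ hsumσ m
      (E := {ω : Fin m → ℕ | a ≤ (∑ i, (ω i : ℝ)) / m ∧ (∑ i, (ω i : ℝ)) / m ≤ b})
      (c := m * b) ?_
    · refine hch.trans ?_
      apply ENNReal.ofReal_le_ofReal
      apply Real.exp_le_exp.2
      have h2 : -(σ * ((m : ℝ) * b)) + (m : ℝ) * Real.log (Zfun g (Real.exp σ * φ) / Zfun g φ)
          = -((m:ℝ) * (σ * b - Lr g φ σ)) := by rw [Lr]; ring
      rw [h2]
      exact neg_le_neg (mul_le_mul_of_nonneg_left hlt.le (Nat.cast_nonneg m))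
    · rintro ω ⟨_, h2⟩
      rcases Nat.eq_zero_or_pos m with hm | hm
      · subst hm
        norm_num [Finset.univ_eq_empty, Finset.sum_empty]
      · have hmpos : (0:ℝ) < (m:ℝ) := Nat.cast_pos.2 hm
        rw [div_le_iff₀ hmpos] at h2
        have hp := mul_nonneg (neg_nonneg.2 hσ0)
          (by linarith : (0:ℝ) ≤ b * (m:ℝ) - ∑ i, (ω i : ℝ))
        nlinarith [hp]


lemma Pmeas_singleton (k : ℕ) : Pmeas g φ {k} = ENNReal.ofReal (Pzr g φ k) := by
  rw [← lintegral_indicator_one (measurableSet_singleton k), Pmeas_lintegral,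
    tsum_eq_single k ?_]
  · simp
  · intro j hj
    have : j ∉ ({k} : Set ℕ) := by simpa using hj
    simp [Set.indicator_of_notMem this]

lemma pi_singleton_zero (hgpos : ∀ k : ℕ, 1 ≤ k → 0 < g k) (hφ0 : 0 < φ)
    (hsumφ : Summable (fun k : ℕ => φ ^ k / gfact g k)) (m : ℕ) :
    (Measure.pi fun _ : Fin m => Pmeas g φ) {fun _ => 0} =
      ENNReal.ofReal (Pzr g φ 0) ^ m := by
  haveI : IsFiniteMeasure (Pmeas g φ) :=
    ⟨by rw [Pmeas_univ hgpos hφ0 hsumφ]; exact ENNReal.one_lt_top⟩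
  have h : ({fun _ => 0} : Set (Fin m → ℕ)) = Set.pi Set.univ (fun _ => ({0} : Set ℕ)) := by
    ext ω
    simp [funext_iff]
  rw [h, Measure.pi_pi]
  simp [Pmeas_singleton, Finset.prod_const]

lemma Jrate_zero_le (hgpos : ∀ k : ℕ, 1 ≤ k → 0 < g k) (hrad : IsConvRadius g φstar)
    (hφ0 : 0 < φ) (hsumφ : Summable (fun k : ℕ => φ ^ k / gfact g k)) :
    Jrate g φstar φ 0 ≤ ((Real.log (Zfun g φ) : ℝ) : EReal) := by
  refine iSup_le fun θ => ?_
  by_cases hc : ENNReal.ofReal (Real.exp θ * φ) < φstar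
  · rw [LambdaFn_of_lt hc, ← EReal.coe_sub, EReal.coe_le_coe_iff]
    have hsumθ := summable_Z hrad (mul_nonneg (Real.exp_pos θ).le hφ0.le) hc
    have h1 : 0 ≤ Real.log (Zfun g (Real.exp θ * φ)) :=
      Real.log_nonneg (Zfun_ge_one hgpos (mul_nonneg (Real.exp_pos θ).le hφ0.le) hsumθ)
    rw [Lr, Real.log_div (Zfun_pos hgpos (mul_nonneg (Real.exp_pos θ).le hφ0.le) hsumθ).ne'
      (Zfun_pos hgpos hφ0.le hsumφ).ne']
    linarith
  · rw [LambdaFn_of_not_lt hc, EReal.sub_top]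
    exact bot_le
end Aux

set_option maxHeartbeats 2000000 in
/-- Laplace–Varadhan upper bound for the empirical mean under `(P_φ)^{⊗m}`:
for continuous `G` with `|G(λ)| ≤ C₁ + C₂ λ` (and `e^{q C₂} φ < φ*` for some
`q > 1`), `limsup_m (1/m) log ∫ exp(m G((ω₁+⋯+ω_m)/m)) d(P_φ)^{⊗m} ≤
sup_{λ ≥ 0} (G(λ) − J(λ))`. -/
theorem stmt15 (g : ℕ → ℝ) (hmono : Monotone g) (hg0 : g 0 = 0)
    (hgpos : ∀ k : ℕ, 1 ≤ k → 0 < g k)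
    (φstar : ℝ≥0∞) (hφstar : 0 < φstar) (hrad : IsConvRadius g φstar)
    (φ : ℝ) (hφ0 : 0 < φ) (hφlt : ENNReal.ofReal φ < φstar)
    (G : ℝ → ℝ) (hGcont : Continuous G)
    (C₁ C₂ : ℝ) (hC₁ : 0 ≤ C₁) (hC₂ : 0 ≤ C₂)
    (hG : ∀ lam : ℝ, 0 ≤ lam → |G lam| ≤ C₁ + C₂ * lam)
    (hq : ∃ q : ℝ, 1 < q ∧ ENNReal.ofReal (Real.exp (q * C₂) * φ) < φstar) :
    Filter.limsup
      (fun m : ℕ =>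
        (((1 / m : ℝ) * Real.log
          (∫ ω : Fin m → ℕ,
            Real.exp (m * G ((∑ i : Fin m, (ω i : ℝ)) / m))
              ∂Measure.pi fun _ : Fin m => Pmeas g φ) : ℝ) : EReal))
      Filter.atTop ≤
    ⨆ lam ∈ Set.Ici (0 : ℝ), (((G lam : ℝ) : EReal) - Jrate g φstar φ lam) := by
  classical
  have hsumφ : Summable (fun k : ℕ => φ ^ k / gfact g k) := summable_Z hrad hφ0.le hφlt
  haveI hPfin : IsFiniteMeasure (Pmeas g φ) :=
    ⟨by rw [Pmeas_univ hgpos hφ0 hsumφ]; exact ENNReal.one_lt_top⟩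
  set R : EReal := ⨆ lam ∈ Set.Ici (0 : ℝ),
      (((G lam : ℝ) : EReal) - Jrate g φstar φ lam) with hRdef
  rcases eq_or_ne R ⊤ with hRtop | hRtop
  · rw [hRtop]; exact le_top
  have hR0 : (((G 0 - Real.log (Zfun g φ) : ℝ)) : EReal) ≤ R := by
    have h0 : (0:ℝ) ∈ Set.Ici (0:ℝ) := Set.mem_Ici.mpr le_rfl
    refine le_trans ?_
      (le_biSup (f := fun lam : ℝ => ((G lam : ℝ) : EReal) - Jrate g φstar φ lam) h0)
    have hJ0 := Jrate_zero_le hgpos hrad hφ0 hsumφ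
    calc ((G 0 - Real.log (Zfun g φ) : ℝ) : EReal)
        = ((G 0 : ℝ) : EReal) - ((Real.log (Zfun g φ) : ℝ) : EReal) := EReal.coe_sub _ _
      _ ≤ ((G 0 : ℝ) : EReal) - Jrate g φstar φ 0 := EReal.sub_le_sub le_rfl hJ0
  have hRbot : R ≠ ⊥ := by
    intro h
    rw [h, le_bot_iff] at hR0
    exact EReal.coe_ne_bot _ hR0
  set r : ℝ := R.toReal with hrdef
  have hRr : R = (r : EReal) := (EReal.coe_toReal hRtop hRbot).symm
  -- key consequence of the definition of R
  have hkey : ∀ lam : ℝ, 0 ≤ lam → ∀ s : ℝ,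
      Jrate g φstar φ lam ≤ (s : EReal) → G lam ≤ r + s := by
    intro lam hlam s hs
    have hub : ((G lam : ℝ) : EReal) - Jrate g φstar φ lam ≤ R :=
      le_biSup (f := fun lam : ℝ => ((G lam : ℝ) : EReal) - Jrate g φstar φ lam)
        (Set.mem_Ici.mpr hlam)
    have hJnn : (0 : EReal) ≤ Jrate g φstar φ lam := by
      refine le_trans (Jp_nonneg hgpos hφ0 hφlt hsumφ lam) ?_
      rw [Jrate_eq_max]
      exact le_max_left _ _
    have hne_top : Jrate g φstar φ lam ≠ ⊤ := (hs.trans_lt (EReal.coe_lt_top s)).ne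
    have hne_bot : Jrate g φstar φ lam ≠ ⊥ := by
      intro h
      simp [h] at hJnn
    have hcoe : ((Jrate g φstar φ lam).toReal : EReal) = Jrate g φstar φ lam :=
      EReal.coe_toReal hne_top hne_bot
    rw [← hcoe, ← EReal.coe_sub, hRr, EReal.coe_le_coe_iff] at hub
    have hjs : (Jrate g φstar φ lam).toReal ≤ s := by
      rw [← hcoe] at hs
      exact EReal.coe_le_coe_iff.mp hs
    linarith
  -- main epsilon bound
  have main : ∀ ε : ℝ, 0 < ε →
      Filter.limsup
        (fun m : ℕ =>
          (((1 / m : ℝ) * Real.log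
            (∫ ω : Fin m → ℕ,
              Real.exp (m * G ((∑ i : Fin m, (ω i : ℝ)) / m))
                ∂Measure.pi fun _ : Fin m => Pmeas g φ) : ℝ) : EReal))
        Filter.atTop ≤ ((r + 3 * ε : ℝ) : EReal) := by
    intro ε hε
    -- a tilt strictly above C₂
    obtain ⟨θb, hθbC, hθbcond⟩ : ∃ θb : ℝ, C₂ < θb ∧
        ENNReal.ofReal (Real.exp θb * φ) < φstar := by
      rcases hq with ⟨q, hq1, hqlt⟩
      rcases lt_or_eq_of_le hC₂ with hC2pos | hC2zero
      · refine ⟨q * C₂, by nlinarith, hqlt⟩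
      · rcases eq_or_ne φstar ⊤ with htop | htop
        · exact ⟨1, by rw [← hC2zero]; norm_num, by rw [htop]; exact ENNReal.ofReal_lt_top⟩
        · have hc : φ < φstar.toReal := by
            have h := hφlt
            rw [← ENNReal.ofReal_toReal htop, ENNReal.ofReal_lt_ofReal_iff_of_nonneg hφ0.le] at h
            exact h
          have hsmφ : φ < (φ + φstar.toReal)/2 := by linarith
          have hsm0 : 0 < (φ + φstar.toReal)/2 := hφ0.trans hsmφ
          refine ⟨Real.log ((φ + φstar.toReal)/2/φ), ?_, ?_⟩
          · rw [← hC2zero]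
            exact Real.log_pos ((one_lt_div hφ0).2 hsmφ)
          · rw [Real.exp_log (div_pos hsm0 hφ0), div_mul_cancel₀ _ hφ0.ne']
            calc ENNReal.ofReal ((φ + φstar.toReal)/2)
                < ENNReal.ofReal φstar.toReal :=
                  (ENNReal.ofReal_lt_ofReal_iff_of_nonneg hsm0.le).2 (by linarith)
              _ = φstar := ENNReal.ofReal_toReal htop
    have hsumθb := summable_Z hrad (mul_nonneg (Real.exp_pos θb).le hφ0.le) hθbcond
    have hθbC2 : 0 < θb - C₂ := by linarith
    set K : ℝ := Lr g φ θb with hK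
    set L : ℝ := max 0 ((C₁ + K - r - ε)/(θb - C₂)) with hLdef
    have hL0 : 0 ≤ L := le_max_left _ _
    have hLkey : C₁ - (θb - C₂) * L + K ≤ r + ε := by
      have h := le_max_right 0 ((C₁ + K - r - ε)/(θb - C₂))
      rw [div_le_iff₀ hθbC2] at h
      linarith
    obtain ⟨δ, hδ0, hδ⟩ := Metric.uniformContinuousOn_iff.mp
      (IsCompact.uniformContinuousOn_of_continuous (isCompact_Icc (a := (0:ℝ)) (b := L+1))
        hGcont.continuousOn) ε hε
    set δ' : ℝ := min δ 1 / 2 with hδ'def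
    have hδ'0 : 0 < δ' := div_pos (lt_min hδ0 one_pos) two_pos
    have hδ'δ : δ' < δ := by
      have h1 := min_le_left δ 1
      rw [hδ'def]
      linarith
    have hδ'1 : δ' ≤ 1 := by
      have h1 := min_le_right δ 1
      rw [hδ'def]
      linarith
    set N : ℕ := ⌈L/δ'⌉₊ with hN
    have hLN : L ≤ N * δ' := (div_le_iff₀ hδ'0).mp (Nat.le_ceil _)
    have hNL1 : (N:ℝ) * δ' ≤ L + 1 := by
      have h := Nat.ceil_lt_add_one (div_nonneg hL0 hδ'0.le)
      have h2 := mul_lt_mul_of_pos_right h hδ'0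
      have h3 : (L/δ' + 1) * δ' = L + δ' := by field_simp
      rw [h3] at h2
      rw [← hN] at h2
      linarith
    set Gb : ℝ := C₁ + C₂ * (L + 1) with hGb
    set capR : ℝ := Gb - r - 2*ε with hcapR
    have hbound : ∀ m : ℕ, 1 ≤ m →
        (∫⁻ ω : Fin m → ℕ, ENNReal.ofReal (Real.exp (m * G ((∑ i : Fin m, (ω i : ℝ)) / m)))
            ∂Measure.pi fun _ : Fin m => Pmeas g φ) ≤
          ENNReal.ofReal ((N + 1) * Real.exp (m * (r + 3*ε))) := by
      intro m hm
      have hm0 : (0:ℝ) < m := by exact_mod_cast hm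
      set Sb : (Fin m → ℕ) → ℝ := fun ω => (∑ i : Fin m, (ω i : ℝ)) / m with hSb
      set f : (Fin m → ℕ) → ℝ≥0∞ :=
        fun ω => ENNReal.ofReal (Real.exp (m * G (Sb ω))) with hf
      have hSb0 : ∀ ω, 0 ≤ Sb ω :=
        fun ω => div_nonneg (Finset.sum_nonneg fun i _ => Nat.cast_nonneg _) hm0.le
      have hmS : ∀ ω, (m:ℝ) * Sb ω = ∑ i : Fin m, (ω i : ℝ) := by
        intro ω
        rw [hSb]
        field_simp
      set Tail : Set (Fin m → ℕ) := {ω | L ≤ Sb ω} with hTail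
      set E : ℕ → Set (Fin m → ℕ) :=
        fun j => {ω | (j:ℝ)*δ' ≤ Sb ω ∧ Sb ω ≤ ((j:ℝ)+1)*δ'} with hE
      -- pointwise covering
      have hcover : ∀ ω, f ω ≤
          (∑ j ∈ Finset.range N, Set.indicator (E j) f ω) + Set.indicator Tail f ω := by
        intro ω
        by_cases hT : ω ∈ Tail
        · rw [Set.indicator_of_mem hT]
          exact le_add_self
        · have hSL : Sb ω < L := not_le.mp hT
          have hjr : ⌊Sb ω/δ'⌋₊ ∈ Finset.range N := by
            rw [Finset.mem_range, hN]
            have h1 : Sb ω/δ' < L/δ' := (div_lt_div_iff_of_pos_right hδ'0).2 hSL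
            exact (Nat.floor_lt (div_nonneg (hSb0 ω) hδ'0.le)).2
              (lt_of_lt_of_le h1 (Nat.le_ceil _))
          have hmem : ω ∈ E ⌊Sb ω/δ'⌋₊ := by
            constructor
            · calc ((⌊Sb ω/δ'⌋₊:ℝ))*δ' ≤ (Sb ω/δ')*δ' :=
                  mul_le_mul_of_nonneg_right (Nat.floor_le (div_nonneg (hSb0 ω) hδ'0.le)) hδ'0.le
                _ = Sb ω := by field_simp
            · calc Sb ω = (Sb ω/δ')*δ' := by field_simp
                _ ≤ ((⌊Sb ω/δ'⌋₊:ℝ)+1)*δ' :=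
                  mul_le_mul_of_nonneg_right (Nat.lt_floor_add_one _).le hδ'0.le
          calc f ω = Set.indicator (E ⌊Sb ω/δ'⌋₊) f ω := (Set.indicator_of_mem hmem f).symm
            _ ≤ ∑ j ∈ Finset.range N, Set.indicator (E j) f ω :=
              Finset.single_le_sum (f := fun j => Set.indicator (E j) f ω)
                (fun _ _ => zero_le) hjr
            _ ≤ _ := self_le_add_right _ _
      have hsplit : (∫⁻ ω, f ω ∂Measure.pi fun _ : Fin m => Pmeas g φ) ≤
          (∑ j ∈ Finset.range N,
            ∫⁻ ω, Set.indicator (E j) f ω ∂Measure.pi fun _ : Fin m => Pmeas g φ) +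
          ∫⁻ ω, Set.indicator Tail f ω ∂Measure.pi fun _ : Fin m => Pmeas g φ := by
        refine le_trans (lintegral_mono hcover) (le_of_eq ?_)
        rw [lintegral_add_left (measurable_nat_pi _),
          lintegral_finset_sum _ (fun j _ => measurable_nat_pi _)]
      -- generic indicator bound
      have hindle : ∀ (Ev : Set (Fin m → ℕ)) (gb : ℝ), (∀ ω ∈ Ev, G (Sb ω) ≤ gb) →
          (∫⁻ ω, Set.indicator Ev f ω ∂Measure.pi fun _ : Fin m => Pmeas g φ) ≤
            ENNReal.ofReal (Real.exp (m*gb)) *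
              (Measure.pi fun _ : Fin m => Pmeas g φ) Ev := by
        intro Ev gb hgb
        rw [lintegral_indicator (Ev.to_countable.measurableSet)]
        refine le_trans (setLIntegral_mono measurable_const fun ω hω => ?_)
          (le_of_eq (setLIntegral_const _ _))
        exact ENNReal.ofReal_le_ofReal
          (Real.exp_le_exp.2 (mul_le_mul_of_nonneg_left (hgb ω hω) hm0.le))
      -- tail bound
      have htail : (∫⁻ ω, Set.indicator Tail f ω ∂Measure.pi fun _ : Fin m => Pmeas g φ) ≤
          ENNReal.ofReal (Real.exp (m*(r+ε))) := by
        have hpt : ∀ ω, Set.indicator Tail f ω ≤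
            ENNReal.ofReal (Real.exp (m*(C₁ - (θb - C₂)*L))) *
              ENNReal.ofReal (Real.exp (θb * ∑ i : Fin m, (ω i : ℝ))) := by
          intro ω
          by_cases hT : ω ∈ Tail
          · rw [Set.indicator_of_mem hT, hf, ← ENNReal.ofReal_mul (Real.exp_pos _).le,
              ← Real.exp_add]
            refine ENNReal.ofReal_le_ofReal (Real.exp_le_exp.2 ?_)
            have hTm : L ≤ Sb ω := hT
            have hS : (m:ℝ)*L ≤ ∑ i : Fin m, (ω i : ℝ) := by
              rw [← hmS ω]
              exact mul_le_mul_of_nonneg_left hTm hm0.le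
            have hGle : G (Sb ω) ≤ C₁ + C₂ * Sb ω := le_trans (le_abs_self _) (hG _ (hSb0 ω))
            have h1 : (m:ℝ)*G (Sb ω) ≤ m*C₁ + C₂ * (∑ i : Fin m, (ω i : ℝ)) := by
              calc (m:ℝ)*G (Sb ω) ≤ m*(C₁ + C₂*Sb ω) := mul_le_mul_of_nonneg_left hGle hm0.le
                _ = m*C₁ + C₂*((m:ℝ)*Sb ω) := by ring
                _ = m*C₁ + C₂*(∑ i : Fin m, (ω i : ℝ)) := by rw [hmS ω]
            have h2 := mul_le_mul_of_nonneg_left hS hθbC2.le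
            linarith
          · rw [Set.indicator_of_notMem hT]
            exact zero_le
        have hratio : 0 < Zfun g (Real.exp θb * φ) / Zfun g φ :=
          div_pos (Zfun_pos hgpos (mul_nonneg (Real.exp_pos θb).le hφ0.le) hsumθb)
            (Zfun_pos hgpos hφ0.le hsumφ)
        calc (∫⁻ ω, Set.indicator Tail f ω ∂Measure.pi fun _ : Fin m => Pmeas g φ)
            ≤ ∫⁻ ω, ENNReal.ofReal (Real.exp (m*(C₁ - (θb - C₂)*L))) *
                ENNReal.ofReal (Real.exp (θb * ∑ i : Fin m, (ω i : ℝ)))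
                ∂Measure.pi fun _ : Fin m => Pmeas g φ := lintegral_mono hpt
          _ = ENNReal.ofReal (Real.exp (m*(C₁ - (θb - C₂)*L))) *
                ENNReal.ofReal ((Zfun g (Real.exp θb * φ) / Zfun g φ) ^ m) := by
              rw [lintegral_const_mul' _ _ ENNReal.ofReal_ne_top,
                mgf_pi hgpos hφ0 hsumφ hsumθb m]
          _ ≤ ENNReal.ofReal (Real.exp (m*(r+ε))) := by
              rw [← ENNReal.ofReal_mul (Real.exp_pos _).le,
                ← Real.exp_log (pow_pos hratio m), Real.log_pow, ← Real.exp_add]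
              refine ENNReal.ofReal_le_ofReal (Real.exp_le_exp.2 ?_)
              have hKK : Real.log (Zfun g (Real.exp θb * φ) / Zfun g φ) = K := by rw [hK, Lr]
              rw [hKK]
              nlinarith [hLkey, hm0.le]
      -- per-interval bound
      have hj : ∀ j ∈ Finset.range N,
          (∫⁻ ω, Set.indicator (E j) f ω ∂Measure.pi fun _ : Fin m => Pmeas g φ) ≤
            ENNReal.ofReal (Real.exp (m*(r+3*ε))) := by
        intro j hjN
        have hab : ((j:ℝ))*δ' ≤ ((j:ℝ)+1)*δ' := by nlinarith [hδ'0.le]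
        have ha0 : 0 ≤ ((j:ℝ))*δ' := mul_nonneg (Nat.cast_nonneg _) hδ'0.le
        have hbL1 : ((j:ℝ)+1)*δ' ≤ L + 1 := by
          have hjN' : (j:ℝ)+1 ≤ (N:ℝ) := by
            have := Finset.mem_range.mp hjN
            exact_mod_cast Nat.succ_le_of_lt this
          calc ((j:ℝ)+1)*δ' ≤ (N:ℝ)*δ' := mul_le_mul_of_nonneg_right hjN' hδ'0.le
            _ ≤ L+1 := hNL1
        have hmeasle : ∀ c : ℝ,
            (c:EReal) < max (Jp g φstar φ ((j:ℝ)*δ')) (Jm g φstar φ (((j:ℝ)+1)*δ')) →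
            (Measure.pi fun _ : Fin m => Pmeas g φ) (E j) ≤
              ENNReal.ofReal (Real.exp (-((m:ℝ)*c))) := by
          intro c hc
          exact meas_Icc_le hgpos hrad hφ0 hsumφ m hc
        by_cases hcase : ((capR:ℝ):EReal) <
            max (Jp g φstar φ ((j:ℝ)*δ')) (Jm g φstar φ (((j:ℝ)+1)*δ'))
        · have hmeas := hmeasle capR hcase
          have hgb : ∀ ω ∈ E j, G (Sb ω) ≤ Gb := by
            intro ω hω
            have h1 : Sb ω ≤ L+1 := le_trans hω.2 hbL1
            have h2 : G (Sb ω) ≤ C₁ + C₂ * Sb ω := le_trans (le_abs_self _) (hG _ (hSb0 ω))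
            rw [hGb]
            nlinarith [hC₂, hSb0 ω]
          calc (∫⁻ ω, Set.indicator (E j) f ω ∂Measure.pi fun _ : Fin m => Pmeas g φ)
              ≤ ENNReal.ofReal (Real.exp (m*Gb)) *
                  (Measure.pi fun _ : Fin m => Pmeas g φ) (E j) := hindle _ _ hgb
            _ ≤ ENNReal.ofReal (Real.exp (m*Gb)) *
                  ENNReal.ofReal (Real.exp (-((m:ℝ)*capR))) := mul_le_mul_right hmeas _
            _ = ENNReal.ofReal (Real.exp (m*Gb + -((m:ℝ)*capR))) := by
                rw [← ENNReal.ofReal_mul (Real.exp_pos _).le, ← Real.exp_add]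
            _ ≤ ENNReal.ofReal (Real.exp (m*(r+3*ε))) := by
                refine ENNReal.ofReal_le_ofReal (Real.exp_le_exp.2 ?_)
                rw [hcapR]
                nlinarith [hε, hm0.le]
        · rw [not_lt] at hcase
          have hM0 : (0:EReal) ≤
              max (Jp g φstar φ ((j:ℝ)*δ')) (Jm g φstar φ (((j:ℝ)+1)*δ')) :=
            le_trans (Jp_nonneg hgpos hφ0 hφlt hsumφ _) (le_max_left _ _)
          have hMtop : max (Jp g φstar φ ((j:ℝ)*δ')) (Jm g φstar φ (((j:ℝ)+1)*δ')) ≠ ⊤ :=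
            (hcase.trans_lt (EReal.coe_lt_top _)).ne
          have hMbot : max (Jp g φstar φ ((j:ℝ)*δ')) (Jm g φstar φ (((j:ℝ)+1)*δ')) ≠ ⊥ := by
            intro h
            rw [h] at hM0
            simp at hM0
          set μ : ℝ := (max (Jp g φstar φ ((j:ℝ)*δ')) (Jm g φstar φ (((j:ℝ)+1)*δ'))).toReal
            with hμdef
          have hμER : (μ:EReal) =
              max (Jp g φstar φ ((j:ℝ)*δ')) (Jm g φstar φ (((j:ℝ)+1)*δ')) :=
            EReal.coe_toReal hMtop hMbot
          have hμ0 : 0 ≤ μ := by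
            have h := hM0
            rw [← hμER] at h
            exact_mod_cast h
          obtain ⟨lam, hlamIcc, hlamJ⟩ := exists_low_J hgpos hrad hφ0 hsumφ hab hμ0 hε
            (by rw [hμER]; exact le_max_left _ _) (by rw [hμER]; exact le_max_right _ _)
          have hlam0 : 0 ≤ lam := le_trans ha0 hlamIcc.1
          have hGlam : G lam ≤ r + (μ + ε) := hkey lam hlam0 (μ+ε) hlamJ
          have hgb : ∀ ω ∈ E j, G (Sb ω) ≤ r + μ + 2*ε := by
            intro ω hω
            have hSbI : Sb ω ∈ Set.Icc (0:ℝ) (L+1) := ⟨hSb0 ω, le_trans hω.2 hbL1⟩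
            have hlamI : lam ∈ Set.Icc (0:ℝ) (L+1) := ⟨hlam0, le_trans hlamIcc.2 hbL1⟩
            have hdist : dist (Sb ω) lam < δ := by
              rw [Real.dist_eq, abs_lt]
              have h1 := hω.1
              have h2 := hω.2
              have h3 := hlamIcc.1
              have h4 := hlamIcc.2
              constructor <;> nlinarith [hδ'δ]
            have h5 := hδ (Sb ω) hSbI lam hlamI hdist
            rw [Real.dist_eq] at h5
            have h6 := (abs_lt.mp h5).2
            linarith
          have hmeas := hmeasle (μ - ε) (by
            rw [← hμER]
            exact_mod_cast (by linarith : μ - ε < μ))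
          calc (∫⁻ ω, Set.indicator (E j) f ω ∂Measure.pi fun _ : Fin m => Pmeas g φ)
              ≤ ENNReal.ofReal (Real.exp (m*(r + μ + 2*ε))) *
                  (Measure.pi fun _ : Fin m => Pmeas g φ) (E j) := hindle _ _ hgb
            _ ≤ ENNReal.ofReal (Real.exp (m*(r + μ + 2*ε))) *
                  ENNReal.ofReal (Real.exp (-((m:ℝ)*(μ - ε)))) := mul_le_mul_right hmeas _
            _ = ENNReal.ofReal (Real.exp (m*(r + μ + 2*ε) + -((m:ℝ)*(μ - ε)))) := by
                rw [← ENNReal.ofReal_mul (Real.exp_pos _).le, ← Real.exp_add]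
            _ = ENNReal.ofReal (Real.exp (m*(r+3*ε))) := by
                congr 1
                congr 1
                ring
      -- combine
      calc (∫⁻ ω : Fin m → ℕ, f ω ∂Measure.pi fun _ : Fin m => Pmeas g φ)
          ≤ (∑ j ∈ Finset.range N,
              ∫⁻ ω, Set.indicator (E j) f ω ∂Measure.pi fun _ : Fin m => Pmeas g φ) +
            ∫⁻ ω, Set.indicator Tail f ω ∂Measure.pi fun _ : Fin m => Pmeas g φ := hsplit
        _ ≤ (∑ _j ∈ Finset.range N, ENNReal.ofReal (Real.exp (m*(r+3*ε)))) +
            ENNReal.ofReal (Real.exp (m*(r+ε))) := add_le_add (Finset.sum_le_sum hj) htail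
        _ ≤ ENNReal.ofReal ((N + 1) * Real.exp (m * (r + 3*ε))) := by
            rw [Finset.sum_const, Finset.card_range]
            have hxx : ((N:ℝ) + 1) * Real.exp (m * (r + 3*ε)) =
                (N:ℝ) * Real.exp (m * (r + 3*ε)) + Real.exp (m * (r + 3*ε)) := by ring
            rw [hxx, ENNReal.ofReal_add (by positivity) (Real.exp_pos _).le,
              ENNReal.ofReal_mul (Nat.cast_nonneg N), ENNReal.ofReal_natCast]
            refine add_le_add ?_ ?_
            · rw [nsmul_eq_mul]
            · refine ENNReal.ofReal_le_ofReal (Real.exp_le_exp.2 ?_)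
              nlinarith [hε, hm0.le]
    have hseq : ∀ m : ℕ, 1 ≤ m →
        (((1 / m : ℝ) * Real.log (∫ ω : Fin m → ℕ,
            Real.exp (m * G ((∑ i : Fin m, (ω i : ℝ)) / m))
            ∂Measure.pi fun _ : Fin m => Pmeas g φ) : ℝ) : EReal) ≤
          (((1 / m : ℝ) * Real.log (N + 1) + (r + 3*ε) : ℝ) : EReal) := by
      intro m hm
      have hm0 : (0:ℝ) < m := by exact_mod_cast hm
      have hIeq : (∫ ω : Fin m → ℕ, Real.exp (m * G ((∑ i : Fin m, (ω i : ℝ)) / m))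
            ∂Measure.pi fun _ : Fin m => Pmeas g φ) =
          (∫⁻ ω : Fin m → ℕ, ENNReal.ofReal (Real.exp (m * G ((∑ i : Fin m, (ω i : ℝ)) / m)))
            ∂Measure.pi fun _ : Fin m => Pmeas g φ).toReal := by
        rw [integral_eq_lintegral_of_nonneg_ae
          (Filter.Eventually.of_forall fun ω => (Real.exp_pos _).le)
          (measurable_nat_pi _).aestronglyMeasurable]
      have hup := hbound m hm
      have hIle : (∫ ω : Fin m → ℕ, Real.exp (m * G ((∑ i : Fin m, (ω i : ℝ)) / m))
            ∂Measure.pi fun _ : Fin m => Pmeas g φ) ≤ (N + 1) * Real.exp (m * (r + 3*ε)) := by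
        rw [hIeq]
        exact ENNReal.toReal_le_of_le_ofReal (by positivity) hup
      have hω₀ : ((∑ i : Fin m, (((fun _ => 0 : Fin m → ℕ) i : ℕ) : ℝ)) / (m:ℝ)) = 0 := by
        simp
      have hlow : ENNReal.ofReal (Real.exp (m * G 0) * Pzr g φ 0 ^ m) ≤
          ∫⁻ ω : Fin m → ℕ, ENNReal.ofReal (Real.exp (m * G ((∑ i : Fin m, (ω i : ℝ)) / m)))
            ∂Measure.pi fun _ : Fin m => Pmeas g φ := by
        have h1 := setLIntegral_le_lintegral (μ := Measure.pi fun _ : Fin m => Pmeas g φ)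
          ({fun _ => 0} : Set (Fin m → ℕ))
          (fun ω => ENNReal.ofReal (Real.exp (m * G ((∑ i : Fin m, (ω i : ℝ)) / m))))
        rw [lintegral_singleton, hω₀, pi_singleton_zero hgpos hφ0 hsumφ m] at h1
        refine le_trans (le_of_eq ?_) h1
        rw [ENNReal.ofReal_mul (Real.exp_pos _).le,
          ENNReal.ofReal_pow (Pzr_nonneg hgpos hφ0.le hsumφ 0)]
      have hPzr0 : 0 < Pzr g φ 0 := by
        have hZ := Zfun_pos hgpos hφ0.le hsumφ
        rw [Pzr, gfact_zero]
        positivity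
      have hIpos : 0 < (∫ ω : Fin m → ℕ, Real.exp (m * G ((∑ i : Fin m, (ω i : ℝ)) / m))
            ∂Measure.pi fun _ : Fin m => Pmeas g φ) := by
        rw [hIeq]
        refine ENNReal.toReal_pos ?_ (hup.trans_lt ENNReal.ofReal_lt_top).ne
        refine ne_of_gt (lt_of_lt_of_le ?_ hlow)
        exact ENNReal.ofReal_pos.2 (mul_pos (Real.exp_pos _) (pow_pos hPzr0 m))
      rw [EReal.coe_le_coe_iff]
      have hlog : Real.log (∫ ω : Fin m → ℕ, Real.exp (m * G ((∑ i : Fin m, (ω i : ℝ)) / m))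
            ∂Measure.pi fun _ : Fin m => Pmeas g φ) ≤ Real.log (N+1) + m*(r+3*ε) := by
        refine le_trans (Real.log_le_log hIpos hIle) (le_of_eq ?_)
        rw [Real.log_mul (by positivity) (Real.exp_ne_zero _), Real.log_exp]
      have h1m : (0:ℝ) ≤ 1/m := by positivity
      calc (1/m:ℝ) * Real.log (∫ ω : Fin m → ℕ,
              Real.exp (m * G ((∑ i : Fin m, (ω i : ℝ)) / m))
              ∂Measure.pi fun _ : Fin m => Pmeas g φ)
          ≤ (1/m) * (Real.log (N+1) + m*(r+3*ε)) := mul_le_mul_of_nonneg_left hlog h1m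
        _ = (1/m)*Real.log (N+1) + (r+3*ε) := by
            field_simp
    have htend : Filter.Tendsto
        (fun m : ℕ => (((1 / m : ℝ) * Real.log (N + 1) + (r + 3*ε) : ℝ) : EReal))
        Filter.atTop (nhds ((r + 3*ε : ℝ) : EReal)) := by
      rw [EReal.tendsto_coe]
      have h1 : Filter.Tendsto (fun m : ℕ => (1 / m : ℝ) * Real.log (N + 1))
          Filter.atTop (nhds 0) := by
        simpa using tendsto_one_div_atTop_nhds_zero_nat.mul_const (Real.log (N + 1))
      simpa using h1.add_const (r + 3*ε)
    refine le_trans (Filter.limsup_le_limsup (Filter.eventually_atTop.2 ⟨1, hseq⟩)) ?_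
    exact le_of_eq htend.limsup_eq
  -- conclude
  rw [hRr]
  set ls : EReal := Filter.limsup
      (fun m : ℕ =>
        (((1 / m : ℝ) * Real.log
          (∫ ω : Fin m → ℕ,
            Real.exp (m * G ((∑ i : Fin m, (ω i : ℝ)) / m))
              ∂Measure.pi fun _ : Fin m => Pmeas g φ) : ℝ) : EReal))
      Filter.atTop with hls
  by_contra hcon
  rw [not_le] at hcon
  have h1 := main 1 one_pos
  have hne_top2 : ls ≠ ⊤ := (h1.trans_lt (EReal.coe_lt_top _)).ne
  have hne_bot2 : ls ≠ ⊥ := by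
    intro h
    rw [h] at hcon
    exact not_lt_bot hcon
  have hx : (ls.toReal : EReal) = ls := EReal.coe_toReal hne_top2 hne_bot2
  have hrx : r < ls.toReal := by
    rw [← hx] at hcon
    exact EReal.coe_lt_coe_iff.mp hcon
  have h2 := main ((ls.toReal - r)/6) (by linarith)
  rw [← hx] at h2
  have h3 : ls.toReal ≤ r + 3 * ((ls.toReal - r)/6) := EReal.coe_le_coe_iff.mp h2
  linarith
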